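/- Weakly balanced arrays yield balanced composition counts (concrete form of Lemma 4.3): Let (X, {R₀,…,R_s}) be a commutative association scheme with s ≥ 1 classes, fix x₀ ∈ X and n ≥ 2, let α ∈ ℕ^s with |α| ≤ n, let 1 ≤ t ≤ n, and let C be a nonempty subset of (X^n)_α that is a weakly t-balanced array over the scheme with respect to x₀. Then for every β ∈ ℕ^s with |β| ≤ n and all subsets Λ, Λ' ⊆ {1,…,n} with |Λ| = |Λ'| ≤ t, one has |{(x,y) ∈ C × X^n : supp(y) = Λ and c(y,x) = β}| = |{(x,y) ∈ C × X^n : supp(y) = Λ' and c(y,x) = β}|. -/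

import Mathlib

open Finset
open scoped Classical

noncomputable section

/-- The 0-1 adjacency matrix of a relation on `X`. -/
def adjMat {X : Type} [Fintype X] [DecidableEq X] (R : Set (X × X)) : Matrix X X ℂ :=
  fun x y => if (x, y) ∈ R then 1 else 0

/-- A commutative association scheme with `s` classes on a finite set `X`. -/
structure CommAssocScheme (X : Type) [Fintype X] [DecidableEq X] (s : ℕ) where
  R : Fin (s + 1) → Set (X × X)
  rel_nonempty : ∀ i, (R i).Nonempty
  rel_disjoint : ∀ i j, i ≠ j → R i ∩ R j = ∅
  rel_cover : ∀ p : X × X, ∃ i, p ∈ R i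
  rel_diag : R 0 = {p : X × X | p.1 = p.2}
  transpose_closed : ∀ i, ∃ j, {p : X × X | (p.2, p.1) ∈ R i} = R j
  adj_comm : ∀ i j, adjMat (R i) * adjMat (R j) = adjMat (R j) * adjMat (R i)
  adj_span : ∀ i j, adjMat (R i) * adjMat (R j) ∈
    Submodule.span ℂ (Set.range fun k => adjMat (R k))

/-- The composition `c(x,y) ∈ ℕ^s` of two words `x, y ∈ X^n`. -/
def comp {X : Type} [Fintype X] [DecidableEq X] {s : ℕ} (A : CommAssocScheme X s)
    {n : ℕ} (x y : Fin n → X) : Fin s → ℕ :=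
  fun i => (univ.filter fun ℓ => (x ℓ, y ℓ) ∈ A.R i.succ).card

namespace WBA

variable {X : Type} [Fintype X] [DecidableEq X] {s : ℕ}

lemma rel_unique (A : CommAssocScheme X s) {p : X × X} {i j : Fin (s+1)}
    (hi : p ∈ A.R i) (hj : p ∈ A.R j) : i = j := by
  by_contra h
  have h2 := A.rel_disjoint i j h
  have h3 : p ∈ A.R i ∩ A.R j := ⟨hi, hj⟩
  rw [h2] at h3
  exact h3

def typ (A : CommAssocScheme X s) (y z : X) : Fin (s+1) :=
  (A.rel_cover (y, z)).choose

lemma typ_spec (A : CommAssocScheme X s) (y z : X) : (y, z) ∈ A.R (typ A y z) :=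
  (A.rel_cover (y, z)).choose_spec

lemma typ_eq_iff (A : CommAssocScheme X s) {y z : X} {j : Fin (s+1)} :
    typ A y z = j ↔ (y, z) ∈ A.R j := by
  constructor
  · rintro rfl; exact typ_spec A y z
  · intro h; exact rel_unique A (typ_spec A y z) h

lemma sum_adj_entry (A : CommAssocScheme X s) (a b : X) :
    ∑ i, adjMat (A.R i) a b = 1 := by
  rw [Finset.sum_eq_single (typ A a b)]
  · simp [adjMat, typ_spec]
  · intro k _ hk
    simp only [adjMat, ite_eq_right_iff]
    intro hm
    exact absurd (rel_unique A hm (typ_spec A a b)) hk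
  · simp

lemma valency (A : CommAssocScheme X s) (j : Fin (s+1)) (z z' : X) :
    (univ.filter fun v => (v, z) ∈ A.R j).card =
      (univ.filter fun v => (v, z') ∈ A.R j).card := by
  have hspan : (∑ i, adjMat (A.R i)) * adjMat (A.R j) ∈
      Submodule.span ℂ (Set.range fun k => adjMat (A.R k)) := by
    rw [Finset.sum_mul]
    exact Submodule.sum_mem _ fun i _ => A.adj_span i j
  obtain ⟨c, hc⟩ := (Submodule.mem_span_range_iff_exists_fun ℂ).mp hspan
  have key : ∀ w : X, ((univ.filter fun v => (v, w) ∈ A.R j).card : ℂ) = c 0 := by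
    intro w
    have h1 : ((∑ i, adjMat (A.R i)) * adjMat (A.R j)) w w =
        ((univ.filter fun v => (v, w) ∈ A.R j).card : ℂ) := by
      rw [Matrix.mul_apply]
      have he : ∀ v, (∑ i, adjMat (A.R i)) w v = 1 := fun v => by
        rw [Matrix.sum_apply]; exact sum_adj_entry A w v
      simp only [he, one_mul]
      simp [adjMat, Finset.sum_boole]
    have hdiag : ∀ k : Fin (s+1), adjMat (A.R k) w w = if k = 0 then 1 else 0 := by
      intro k
      have h0 : (w, w) ∈ A.R 0 := by rw [A.rel_diag]; simp
      by_cases hk : k = 0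
      · subst hk; simp [adjMat, h0]
      · simp only [adjMat, if_neg hk, ite_eq_right_iff]
        intro hm
        exact absurd (rel_unique A hm h0) hk
    have h2 : (∑ k, c k • adjMat (A.R k)) w w = c 0 := by
      rw [Matrix.sum_apply]
      simp only [Matrix.smul_apply, smul_eq_mul, hdiag, mul_ite, mul_one, mul_zero]
      simp
    rw [hc] at h2
    rw [h1] at h2
    exact h2
  exact_mod_cast (key z).trans (key z').symm

lemma exists_perm_match {α ι : Type*} [Fintype α] [DecidableEq ι] (f g : α → ι)
    (h : ∀ v, (univ.filter fun a => f a = v).card = (univ.filter fun a => g a = v).card) :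
    ∃ σ : α ≃ α, ∀ a, g (σ a) = f a := by
  have e : ∀ v, { a // f a = v } ≃ { a // g a = v } := fun v =>
    Fintype.equivOfCardEq (by
      rw [Fintype.card_subtype, Fintype.card_subtype]
      exact h v)
  exact ⟨Equiv.ofFiberEquiv e, fun a => Equiv.ofFiberEquiv_map e a⟩

lemma fiber_point (A : CommAssocScheme X s) (x₀ z z' : X)
    (hz : typ A x₀ z = typ A x₀ z') (j : Fin (s+1)) (b : Bool) :
    (univ.filter fun v => typ A v z = j ∧ decide (v = x₀) = b).card =
    (univ.filter fun v => typ A v z' = j ∧ decide (v = x₀) = b).card := by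
  have hall : ∀ w : X, (univ.filter fun v => typ A v w = j) =
      (univ.filter fun v => (v, w) ∈ A.R j) := fun w => by
    apply Finset.filter_congr; intro v _; exact typ_eq_iff A
  have hpt : ∀ w : X, (univ.filter fun v => typ A v w = j ∧ v = x₀).card =
      if typ A x₀ w = j then 1 else 0 := by
    intro w
    by_cases h : typ A x₀ w = j
    · rw [if_pos h]
      have : (univ.filter fun v => typ A v w = j ∧ v = x₀) = {x₀} := by
        ext v
        simp only [Finset.mem_filter, Finset.mem_univ, true_and, Finset.mem_singleton]
        constructor
        · exact fun hv => hv.2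
        · rintro rfl; exact ⟨h, rfl⟩
      rw [this]; rfl
    · rw [if_neg h]
      rw [Finset.card_eq_zero, Finset.filter_eq_empty_iff]
      rintro v _ ⟨hj, rfl⟩
      exact h hj
  have hsplit : ∀ w : X,
      (univ.filter fun v => typ A v w = j ∧ v = x₀).card +
      (univ.filter fun v => typ A v w = j ∧ ¬ v = x₀).card =
      (univ.filter fun v => typ A v w = j).card := by
    intro w
    rw [← Finset.card_filter_add_card_filter_not (p := fun v => v = x₀)
      (s := univ.filter fun v => typ A v w = j)]
    rw [Finset.filter_filter, Finset.filter_filter]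
  have htot : (univ.filter fun v => typ A v z = j).card =
      (univ.filter fun v => typ A v z' = j).card := by
    rw [hall, hall]; exact valency A j z z'
  have hp : (univ.filter fun v => typ A v z = j ∧ v = x₀).card =
      (univ.filter fun v => typ A v z' = j ∧ v = x₀).card := by
    rw [hpt, hpt, hz]
  cases b
  · have e1 : ∀ w : X, (univ.filter fun v => typ A v w = j ∧ decide (v = x₀) = false) =
        (univ.filter fun v => typ A v w = j ∧ ¬ v = x₀) := fun w => by
      apply Finset.filter_congr; intro v _; simp
    rw [e1, e1]
    have := hsplit z
    have := hsplit z'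
    omega
  · have e1 : ∀ w : X, (univ.filter fun v => typ A v w = j ∧ decide (v = x₀) = true) =
        (univ.filter fun v => typ A v w = j ∧ v = x₀) := fun w => by
      apply Finset.filter_congr; intro v _; simp
    rw [e1, e1]
    exact hp



lemma card_split {α : Type*} [Fintype α] [DecidableEq α] (Λ : Finset α) (P : α → Prop)
    [DecidablePred P] :
    (univ.filter P).card = (Λ.filter P).card + (Λᶜ.filter P).card := by
  have h1 : (univ.filter P).filter (fun a => a ∈ Λ) = Λ.filter P := by
    ext a; simp [and_comm]
  have h2 : (univ.filter P).filter (fun a => ¬ a ∈ Λ) = Λᶜ.filter P := by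
    ext a; simp [and_comm]
  rw [← h1, ← h2, Finset.card_filter_add_card_filter_not]

lemma card_eq_sum_typ (A : CommAssocScheme X s) {n : ℕ} (x : Fin n → X) (x₀ : X)
    (Λ : Finset (Fin n)) :
    Λ.card = ∑ j : Fin (s+1), (Λ.filter fun ℓ => typ A x₀ (x ℓ) = j).card :=
  Finset.card_eq_sum_card_fiberwise (fun ℓ _ => Finset.mem_univ _)

lemma card_filter_equiv {α : Type*} [Fintype α] [DecidableEq α] (σ : α ≃ α) (Q : α → Prop)
    [DecidablePred Q] [DecidablePred fun m => Q (σ.symm m)] :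
    (univ.filter fun m => Q (σ.symm m)).card = (univ.filter Q).card := by
  apply Finset.card_nbij' σ.symm σ
  · intro a ha; simp only [Finset.mem_coe, Finset.mem_filter, Finset.mem_univ, true_and] at ha ⊢; exact ha
  · intro a ha; simp only [Finset.mem_coe, Finset.mem_filter, Finset.mem_univ, true_and] at ha ⊢
    simpa using ha
  · intro a _; simp
  · intro a _; simp

lemma invariance (A : CommAssocScheme X s) (x₀ : X) {n : ℕ}
    (x x' : Fin n → X) (Λ Λ' : Finset (Fin n)) (β : Fin s → ℕ)
    (hin : ∀ j : Fin (s+1),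
      (Λ.filter fun ℓ => typ A x₀ (x ℓ) = j).card =
        (Λ'.filter fun ℓ => typ A x₀ (x' ℓ) = j).card)
    (hout : ∀ j : Fin (s+1),
      (Λᶜ.filter fun ℓ => typ A x₀ (x ℓ) = j).card =
        (Λ'ᶜ.filter fun ℓ => typ A x₀ (x' ℓ) = j).card) :
    (univ.filter fun y : Fin n → X =>
        (univ.filter fun ℓ => y ℓ ≠ x₀) = Λ ∧ comp A y x = β).card =
    (univ.filter fun y : Fin n → X =>
        (univ.filter fun ℓ => y ℓ ≠ x₀) = Λ' ∧ comp A y x' = β).card := by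
  -- the coordinate permutation σ
  obtain ⟨σ, hσ⟩ := exists_perm_match
      (fun ℓ => (decide (ℓ ∈ Λ), typ A x₀ (x ℓ)))
      (fun ℓ => (decide (ℓ ∈ Λ'), typ A x₀ (x' ℓ))) (by
    rintro ⟨b, j⟩
    have e1 : (univ.filter fun ℓ => (decide (ℓ ∈ Λ), typ A x₀ (x ℓ)) = (b, j)) =
        ((if b then Λ else Λᶜ).filter fun ℓ => typ A x₀ (x ℓ) = j) := by
      ext ℓ; cases b <;> simp [Prod.ext_iff, and_comm]
    have e2 : (univ.filter fun ℓ => (decide (ℓ ∈ Λ'), typ A x₀ (x' ℓ)) = (b, j)) =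
        ((if b then Λ' else Λ'ᶜ).filter fun ℓ => typ A x₀ (x' ℓ) = j) := by
      ext ℓ; cases b <;> simp [Prod.ext_iff, and_comm]
    rw [e1, e2]
    cases b
    · simpa using hout j
    · simpa using hin j)
  have hmemσ : ∀ ℓ, (σ ℓ ∈ Λ' ↔ ℓ ∈ Λ) := by
    intro ℓ
    have h := congrArg Prod.fst (hσ ℓ)
    simpa [decide_eq_decide] using h
  have htypσ : ∀ ℓ, typ A x₀ (x' (σ ℓ)) = typ A x₀ (x ℓ) := fun ℓ =>
    congrArg Prod.snd (hσ ℓ)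
  -- the per-coordinate bijections ψ
  have hψall : ∀ ℓ : Fin n, ∃ ψ : X ≃ X, ∀ v : X,
      (typ A (ψ v) (x' (σ ℓ)), decide (ψ v = x₀)) = (typ A v (x ℓ), decide (v = x₀)) := by
    intro ℓ
    apply exists_perm_match (f := fun v => (typ A v (x ℓ), decide (v = x₀)))
      (g := fun v => (typ A v (x' (σ ℓ)), decide (v = x₀)))
    rintro ⟨j, b⟩
    have e1 : ∀ z : X, (univ.filter fun v => (typ A v z, decide (v = x₀)) = (j, b)) =
        (univ.filter fun v => typ A v z = j ∧ decide (v = x₀) = b) := fun z => by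
      apply Finset.filter_congr; intro v _; simp [Prod.ext_iff]
    rw [e1, e1]
    exact fiber_point A x₀ (x ℓ) (x' (σ ℓ)) (htypσ ℓ).symm j b
  choose ψ hψ using hψall
  have hψtyp : ∀ ℓ v, typ A (ψ ℓ v) (x' (σ ℓ)) = typ A v (x ℓ) := fun ℓ v =>
    congrArg Prod.fst (hψ ℓ v)
  have hψx : ∀ ℓ v, ((ψ ℓ) v = x₀ ↔ v = x₀) := by
    intro ℓ v
    have h := congrArg Prod.snd (hψ ℓ v)
    simpa [decide_eq_decide] using h
  have hrel : ∀ ℓ v (j : Fin (s+1)), ((ψ ℓ v, x' (σ ℓ)) ∈ A.R j ↔ (v, x ℓ) ∈ A.R j) := by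
    intro ℓ v j
    rw [← typ_eq_iff, ← typ_eq_iff, hψtyp]
  have hψsymmx : ∀ ℓ w, ((ψ ℓ).symm w = x₀ ↔ w = x₀) := by
    intro ℓ w
    rw [Equiv.symm_apply_eq]
    constructor
    · intro h; rw [h]; exact (hψx ℓ x₀).mpr rfl
    · intro h; rw [h]; exact ((hψx ℓ x₀).mpr rfl).symm
  -- the bijection on words
  apply Finset.card_nbij' (fun y m => ψ (σ.symm m) (y (σ.symm m)))
    (fun y ℓ => (ψ ℓ).symm (y (σ ℓ)))
  · -- forward membership
    intro y hy
    rw [Finset.mem_coe, Finset.mem_filter] at hy ⊢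
    obtain ⟨-, hsupp, hcomp⟩ := hy
    have hyx : ∀ ℓ, (y ℓ ≠ x₀ ↔ ℓ ∈ Λ) := by
      intro ℓ
      constructor
      · intro h; rw [← hsupp]; simp [h]
      · intro h; rw [← hsupp] at h; simpa using h
    refine ⟨Finset.mem_univ _, ?_, ?_⟩
    · ext m
      simp only [Finset.mem_filter, Finset.mem_univ, true_and]
      rw [ne_eq, hψx, ← ne_eq, hyx, ← hmemσ, Equiv.apply_symm_apply]
    · funext i
      rw [← congrFun hcomp i]
      show (univ.filter fun m => (ψ (σ.symm m) (y (σ.symm m)), x' m) ∈ A.R i.succ).card = _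
      have e : ∀ m, ((ψ (σ.symm m) (y (σ.symm m)), x' m) ∈ A.R i.succ ↔
          (y (σ.symm m), x (σ.symm m)) ∈ A.R i.succ) := by
        intro m
        have := hrel (σ.symm m) (y (σ.symm m)) i.succ
        rwa [Equiv.apply_symm_apply] at this
      rw [Finset.filter_congr (fun m _ => e m)]
      exact card_filter_equiv σ (fun ℓ => (y ℓ, x ℓ) ∈ A.R i.succ)
  · -- backward membership
    intro y hy
    rw [Finset.mem_coe, Finset.mem_filter] at hy ⊢
    obtain ⟨-, hsupp, hcomp⟩ := hy
    have hyx : ∀ m, (y m ≠ x₀ ↔ m ∈ Λ') := by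
      intro m
      constructor
      · intro h; rw [← hsupp]; simp [h]
      · intro h; rw [← hsupp] at h; simpa using h
    refine ⟨Finset.mem_univ _, ?_, ?_⟩
    · ext ℓ
      simp only [Finset.mem_filter, Finset.mem_univ, true_and]
      rw [ne_eq, hψsymmx, ← ne_eq, hyx, hmemσ]
    · funext i
      rw [← congrFun hcomp i]
      show (univ.filter fun ℓ => ((ψ ℓ).symm (y (σ ℓ)), x ℓ) ∈ A.R i.succ).card = _
      have e : ∀ ℓ, (((ψ ℓ).symm (y (σ ℓ)), x ℓ) ∈ A.R i.succ ↔
          (y (σ ℓ), x' (σ ℓ)) ∈ A.R i.succ) := by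
        intro ℓ
        have := hrel ℓ ((ψ ℓ).symm (y (σ ℓ))) i.succ
        rw [Equiv.apply_symm_apply] at this
        exact this.symm
      rw [Finset.filter_congr (fun ℓ _ => e ℓ)]
      have := card_filter_equiv σ.symm (fun m => (y m, x' m) ∈ A.R i.succ)
      simpa [comp] using this
  · intro y _
    funext ℓ
    simp
  · intro y _
    funext m
    simp


lemma sum_gam_le (A : CommAssocScheme X s) (x₀ : X) {n : ℕ} (x : Fin n → X)
    (Λ₀ : Finset (Fin n)) :
    ∑ i : Fin s, (Λ₀.filter fun ℓ => (x₀, x ℓ) ∈ A.R i.succ).card ≤ Λ₀.card := by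
  have h0 : ∀ i : Fin s, (Λ₀.filter fun ℓ => (x₀, x ℓ) ∈ A.R i.succ) =
      (Λ₀.filter fun ℓ => typ A x₀ (x ℓ) = i.succ) := fun i => by
    apply Finset.filter_congr; intro ℓ _; exact (typ_eq_iff A).symm
  have heq : ∑ i : Fin s, (Λ₀.filter fun ℓ => (x₀, x ℓ) ∈ A.R i.succ).card
      = ∑ i : Fin s, (Λ₀.filter fun ℓ => typ A x₀ (x ℓ) = i.succ).card :=
    Finset.sum_congr rfl fun i _ => by rw [h0]
  have htot := card_eq_sum_typ A x x₀ Λ₀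
  rw [Fin.sum_univ_succ] at htot
  omega

lemma invariance_of_gamma (A : CommAssocScheme X s) (x₀ : X) {n : ℕ}
    (x x' : Fin n → X) (Λ Λ' : Finset (Fin n)) (β α : Fin s → ℕ)
    (hcard : Λ.card = Λ'.card)
    (hγ : ∀ i : Fin s, (Λ.filter fun ℓ => (x₀, x ℓ) ∈ A.R i.succ).card =
        (Λ'.filter fun ℓ => (x₀, x' ℓ) ∈ A.R i.succ).card)
    (hα : comp A (fun _ => x₀) x = α) (hα' : comp A (fun _ => x₀) x' = α) :
    (univ.filter fun y : Fin n → X =>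
        (univ.filter fun ℓ => y ℓ ≠ x₀) = Λ ∧ comp A y x = β).card =
    (univ.filter fun y : Fin n → X =>
        (univ.filter fun ℓ => y ℓ ≠ x₀) = Λ' ∧ comp A y x' = β).card := by
  have h0 : ∀ (z : Fin n → X) (Λ₀ : Finset (Fin n)) (i : Fin s),
      (Λ₀.filter fun ℓ => typ A x₀ (z ℓ) = i.succ) =
      (Λ₀.filter fun ℓ => (x₀, z ℓ) ∈ A.R i.succ) := fun z Λ₀ i => by
    apply Finset.filter_congr; intro ℓ _; exact typ_eq_iff A
  have hin : ∀ j : Fin (s+1), (Λ.filter fun ℓ => typ A x₀ (x ℓ) = j).card =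
      (Λ'.filter fun ℓ => typ A x₀ (x' ℓ) = j).card := by
    intro j
    induction j using Fin.cases with
    | zero =>
      have h1 := card_eq_sum_typ A x x₀ Λ
      have h2 := card_eq_sum_typ A x' x₀ Λ'
      rw [Fin.sum_univ_succ] at h1 h2
      have h4 : ∑ i : Fin s, (Λ.filter fun ℓ => typ A x₀ (x ℓ) = i.succ).card =
          ∑ i : Fin s, (Λ'.filter fun ℓ => typ A x₀ (x' ℓ) = i.succ).card :=
        Finset.sum_congr rfl fun i _ => by rw [h0, h0]; exact hγ i
      omega
    | succ i => rw [h0, h0]; exact hγ i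
  have hA : ∀ i : Fin s, (univ.filter fun ℓ : Fin n => typ A x₀ (x ℓ) = i.succ).card = α i :=
    fun i => by rw [h0]; simpa [comp] using congrFun hα i
  have hA' : ∀ i : Fin s, (univ.filter fun ℓ : Fin n => typ A x₀ (x' ℓ) = i.succ).card = α i :=
    fun i => by rw [h0]; simpa [comp] using congrFun hα' i
  have huniv : ∀ j : Fin (s+1), (univ.filter fun ℓ : Fin n => typ A x₀ (x ℓ) = j).card =
      (univ.filter fun ℓ : Fin n => typ A x₀ (x' ℓ) = j).card := by
    intro j
    induction j using Fin.cases with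
    | zero =>
      have h1 := card_eq_sum_typ A x x₀ (univ : Finset (Fin n))
      have h2 := card_eq_sum_typ A x' x₀ (univ : Finset (Fin n))
      rw [Fin.sum_univ_succ] at h1 h2
      have h4 : ∑ i : Fin s, (univ.filter fun ℓ : Fin n => typ A x₀ (x ℓ) = i.succ).card =
          ∑ i : Fin s, (univ.filter fun ℓ : Fin n => typ A x₀ (x' ℓ) = i.succ).card :=
        Finset.sum_congr rfl fun i _ => by rw [hA i, hA' i]
      omega
    | succ i => rw [hA i, hA' i]
  apply invariance A x₀ x x' Λ Λ' β hin
  intro j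
  have c1 := card_split Λ (fun ℓ => typ A x₀ (x ℓ) = j)
  have c2 := card_split Λ' (fun ℓ => typ A x₀ (x' ℓ) = j)
  have h5 := huniv j
  have h6 := hin j
  omega

lemma card_prod_eq_sum {n : ℕ} (C : Finset (Fin n → X))
    (P : (Fin n → X) → (Fin n → X) → Prop) [∀ x, DecidablePred (P x)]
    [DecidablePred fun p : (Fin n → X) × (Fin n → X) => P p.1 p.2] :
    ((C ×ˢ (univ : Finset (Fin n → X))).filter fun p => P p.1 p.2).card =
      ∑ x ∈ C, (univ.filter fun y => P x y).card := by
  rw [Finset.card_eq_sum_card_fiberwise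
    (f := Prod.fst) (t := C) (fun p hp => (Finset.mem_product.mp (Finset.mem_filter.mp hp).1).1)]
  refine Finset.sum_congr rfl fun x hx => ?_
  apply Finset.card_nbij' Prod.snd (fun y => (x, y))
  · rintro ⟨a, y⟩ hp
    simp only [Finset.mem_coe, Finset.mem_filter, Finset.mem_product, Finset.mem_univ, and_true,
      true_and] at hp ⊢
    obtain ⟨⟨-, hP⟩, rfl⟩ := hp
    exact hP
  · intro y hy
    rw [Finset.mem_coe, Finset.mem_filter] at hy
    rw [Finset.mem_coe, Finset.mem_filter, Finset.mem_filter, Finset.mem_product]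
    exact ⟨⟨⟨hx, Finset.mem_univ _⟩, hy.2⟩, rfl⟩
  · rintro ⟨a, y⟩ hp
    rw [Finset.mem_coe, Finset.mem_filter] at hp
    have h2 := hp.2
    simp only at h2
    rw [h2]
  · intro y _; rfl


lemma card_prod_eq_sum' (A : CommAssocScheme X s) (x₀ : X) {n : ℕ}
    (C : Finset (Fin n → X)) (Λ : Finset (Fin n)) (β : Fin s → ℕ) :
    ((C ×ˢ (univ : Finset (Fin n → X))).filter fun p =>
        (univ.filter fun ℓ => p.2 ℓ ≠ x₀) = Λ ∧ comp A p.2 p.1 = β).card =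
      ∑ x ∈ C, (univ.filter fun y : Fin n → X =>
        (univ.filter fun ℓ => y ℓ ≠ x₀) = Λ ∧ comp A y x = β).card :=
  card_prod_eq_sum C (fun x y => (univ.filter fun ℓ => y ℓ ≠ x₀) = Λ ∧ comp A y x = β)

end WBA

open WBA

/-- **Weakly balanced arrays yield balanced composition counts** (a concrete form of
Lemma 4.3): if `C ⊆ (X^n)_α` is a weakly `t`-balanced array with respect to `x₀`, then
for every `β` the number of pairs `(x, y) ∈ C × X^n` with `supp(y) = Λ` and `c(y,x) = β`
depends only on `|Λ|`, for `|Λ| ≤ t`. -/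
theorem weakly_balanced_comp_counts {X : Type} [Fintype X] [DecidableEq X] {s : ℕ}
    (hs : 1 ≤ s) (A : CommAssocScheme X s) (x₀ : X) {n : ℕ} (hn : 2 ≤ n)
    (α : Fin s → ℕ) (hα : (∑ i, α i) ≤ n) (t : ℕ) (ht1 : 1 ≤ t) (htn : t ≤ n)
    (C : Finset (Fin n → X)) (hCne : C.Nonempty)
    (hCα : ∀ x ∈ C, comp A (fun _ => x₀) x = α)
    (hbal : ∀ (Λ Λ' : Finset (Fin n)) (γ : Fin s → ℕ),
      (∑ i, γ i) ≤ Λ.card → Λ.card = Λ'.card → Λ.card ≤ t →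
      (C.filter fun x =>
        ∀ i : Fin s, (Λ.filter fun ℓ => (x₀, x ℓ) ∈ A.R i.succ).card = γ i).card =
      (C.filter fun x =>
        ∀ i : Fin s, (Λ'.filter fun ℓ => (x₀, x ℓ) ∈ A.R i.succ).card = γ i).card) :
    ∀ β : Fin s → ℕ, (∑ i, β i) ≤ n → ∀ Λ Λ' : Finset (Fin n),
      Λ.card = Λ'.card → Λ.card ≤ t →
      ((C ×ˢ (univ : Finset (Fin n → X))).filter fun p =>
        (univ.filter fun ℓ => p.2 ℓ ≠ x₀) = Λ ∧ comp A p.2 p.1 = β).card =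
      ((C ×ˢ (univ : Finset (Fin n → X))).filter fun p =>
        (univ.filter fun ℓ => p.2 ℓ ≠ x₀) = Λ' ∧ comp A p.2 p.1 = β).card := by
  intro β hβ Λ Λ' hcard hΛt
  rw [card_prod_eq_sum' A x₀ C Λ β, card_prod_eq_sum' A x₀ C Λ' β]
  set G : Finset (Fin s → ℕ) :=
    (C.image fun x => fun i : Fin s => (Λ.filter fun ℓ => (x₀, x ℓ) ∈ A.R i.succ).card) ∪
    (C.image fun x => fun i : Fin s => (Λ'.filter fun ℓ => (x₀, x ℓ) ∈ A.R i.succ).card)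
    with hG
  have hm1 : ∀ x ∈ C,
      (fun i : Fin s => (Λ.filter fun ℓ => (x₀, x ℓ) ∈ A.R i.succ).card) ∈ G :=
    fun x hx => Finset.mem_union_left _ (Finset.mem_image_of_mem _ hx)
  have hm2 : ∀ x ∈ C,
      (fun i : Fin s => (Λ'.filter fun ℓ => (x₀, x ℓ) ∈ A.R i.succ).card) ∈ G :=
    fun x hx => Finset.mem_union_right _ (Finset.mem_image_of_mem _ hx)
  rw [← Finset.sum_fiberwise_of_maps_to hm1
      (fun x => (univ.filter fun y : Fin n → X =>
        (univ.filter fun ℓ => y ℓ ≠ x₀) = Λ ∧ comp A y x = β).card),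
    ← Finset.sum_fiberwise_of_maps_to hm2
      (fun x => (univ.filter fun y : Fin n → X =>
        (univ.filter fun ℓ => y ℓ ≠ x₀) = Λ' ∧ comp A y x = β).card)]
  refine Finset.sum_congr rfl fun γ hγG => ?_
  have hγle : ∑ i, γ i ≤ Λ.card := by
    rw [hG, Finset.mem_union] at hγG
    rcases hγG with h | h
    · obtain ⟨x, hx, rfl⟩ := Finset.mem_image.mp h
      exact sum_gam_le A x₀ x Λ
    · obtain ⟨x, hx, rfl⟩ := Finset.mem_image.mp h
      rw [hcard]
      exact sum_gam_le A x₀ x Λ'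
  have efib : ∀ Λ₀ : Finset (Fin n),
      (C.filter fun x =>
        (fun i : Fin s => (Λ₀.filter fun ℓ => (x₀, x ℓ) ∈ A.R i.succ).card) = γ) =
      (C.filter fun x =>
        ∀ i : Fin s, (Λ₀.filter fun ℓ => (x₀, x ℓ) ∈ A.R i.succ).card = γ i) := fun Λ₀ => by
    apply Finset.filter_congr
    intro x _
    exact funext_iff
  have hfibcard :
      (C.filter fun x =>
        (fun i : Fin s => (Λ.filter fun ℓ => (x₀, x ℓ) ∈ A.R i.succ).card) = γ).card =
      (C.filter fun x =>
        (fun i : Fin s => (Λ'.filter fun ℓ => (x₀, x ℓ) ∈ A.R i.succ).card) = γ).card := by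
    rw [efib Λ, efib Λ']
    exact hbal Λ Λ' γ hγle hcard hΛt
  by_cases hne : (C.filter fun x =>
      (fun i : Fin s => (Λ.filter fun ℓ => (x₀, x ℓ) ∈ A.R i.succ).card) = γ).Nonempty
  · have hne' : (C.filter fun x =>
        (fun i : Fin s => (Λ'.filter fun ℓ => (x₀, x ℓ) ∈ A.R i.succ).card) = γ).Nonempty := by
      rw [← Finset.card_pos, ← hfibcard, Finset.card_pos]
      exact hne
    obtain ⟨x₁, hx₁⟩ := hne'
    rw [Finset.mem_filter] at hx₁
    obtain ⟨hx₁C, hx₁γ⟩ := hx₁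
    have key : ∀ (Λ₀ : Finset (Fin n)), Λ₀.card = Λ'.card → ∀ x, x ∈ C →
        (fun i : Fin s => (Λ₀.filter fun ℓ => (x₀, x ℓ) ∈ A.R i.succ).card) = γ →
        (univ.filter fun y : Fin n → X =>
          (univ.filter fun ℓ => y ℓ ≠ x₀) = Λ₀ ∧ comp A y x = β).card =
        (univ.filter fun y : Fin n → X =>
          (univ.filter fun ℓ => y ℓ ≠ x₀) = Λ' ∧ comp A y x₁ = β).card := by
      intro Λ₀ hΛ₀ x hxC hxγ
      apply invariance_of_gamma A x₀ x x₁ Λ₀ Λ' β α hΛ₀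
      · intro i
        rw [congrFun hxγ i, congrFun hx₁γ i]
      · exact hCα x hxC
      · exact hCα x₁ hx₁C
    have e1 : ∑ x ∈ (C.filter fun x =>
        (fun i : Fin s => (Λ.filter fun ℓ => (x₀, x ℓ) ∈ A.R i.succ).card) = γ),
        (univ.filter fun y : Fin n → X =>
          (univ.filter fun ℓ => y ℓ ≠ x₀) = Λ ∧ comp A y x = β).card =
        (C.filter fun x =>
        (fun i : Fin s => (Λ.filter fun ℓ => (x₀, x ℓ) ∈ A.R i.succ).card) = γ).card *
        (univ.filter fun y : Fin n → X =>
          (univ.filter fun ℓ => y ℓ ≠ x₀) = Λ' ∧ comp A y x₁ = β).card := by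
      have e0 : ∀ x ∈ (C.filter fun x =>
          (fun i : Fin s => (Λ.filter fun ℓ => (x₀, x ℓ) ∈ A.R i.succ).card) = γ),
          (univ.filter fun y : Fin n → X =>
            (univ.filter fun ℓ => y ℓ ≠ x₀) = Λ ∧ comp A y x = β).card =
          (univ.filter fun y : Fin n → X =>
            (univ.filter fun ℓ => y ℓ ≠ x₀) = Λ' ∧ comp A y x₁ = β).card := by
        intro x hx
        rw [Finset.mem_filter] at hx
        exact key Λ hcard x hx.1 hx.2
      rw [Finset.sum_congr rfl e0, Finset.sum_const, smul_eq_mul]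
    have e2 : ∑ x ∈ (C.filter fun x =>
        (fun i : Fin s => (Λ'.filter fun ℓ => (x₀, x ℓ) ∈ A.R i.succ).card) = γ),
        (univ.filter fun y : Fin n → X =>
          (univ.filter fun ℓ => y ℓ ≠ x₀) = Λ' ∧ comp A y x = β).card =
        (C.filter fun x =>
        (fun i : Fin s => (Λ'.filter fun ℓ => (x₀, x ℓ) ∈ A.R i.succ).card) = γ).card *
        (univ.filter fun y : Fin n → X =>
          (univ.filter fun ℓ => y ℓ ≠ x₀) = Λ' ∧ comp A y x₁ = β).card := by
      have e0 : ∀ x ∈ (C.filter fun x =>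
          (fun i : Fin s => (Λ'.filter fun ℓ => (x₀, x ℓ) ∈ A.R i.succ).card) = γ),
          (univ.filter fun y : Fin n → X =>
            (univ.filter fun ℓ => y ℓ ≠ x₀) = Λ' ∧ comp A y x = β).card =
          (univ.filter fun y : Fin n → X =>
            (univ.filter fun ℓ => y ℓ ≠ x₀) = Λ' ∧ comp A y x₁ = β).card := by
        intro x hx
        rw [Finset.mem_filter] at hx
        exact key Λ' rfl x hx.1 hx.2
      rw [Finset.sum_congr rfl e0, Finset.sum_const, smul_eq_mul]
    rw [e1, e2, hfibcard]
  · rw [Finset.not_nonempty_iff_eq_empty] at hne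
    have hne' : (C.filter fun x =>
        (fun i : Fin s => (Λ'.filter fun ℓ => (x₀, x ℓ) ∈ A.R i.succ).card) = γ) = ∅ := by
      rw [← Finset.card_eq_zero, ← hfibcard, hne]
      rfl
    rw [hne, hne']
    simp
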